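/- arXiv:1408.0017 — 4 statements merged into one kernel-verified Lean document; each statement's English description precedes it below -/
import Mathlib

section
/- Let P be a finite nonempty set, π⁰ a probability vector on P with all entries positive, (m^{(τ)}_p) ∈ [−1,1] for all τ and p, and (γ_τ) ∈ [0, 1/2]. Define the multiplicative-weights iterates π^{(τ+1)}_p ∝ π^{(τ)}_p(1 − γ_τ m^{(τ)}_p). Then for every horizon T and every p ∈ P: ∑_{τ=0}^{T} γ_τ ⟨m^{(τ)}, π^{(τ)}⟩ ≤ −log(min_p π⁰_p) + ∑_{τ=0}^{T} γ_τ m^{(τ)}_p + ∑_{τ=0}^{T} γ_τ² |m^{(τ)}_p|. -/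
open Finset

lemma log_one_sub_ge {x : ℝ} (h : |x| ≤ 1/2) : -x - x^2 ≤ Real.log (1 - x) := by
  have hx2 : x ≤ 1/2 := (abs_le.mp h).2
  have hx1 : -(1/2) ≤ x := (abs_le.mp h).1
  have hpos : (0:ℝ) < 1 - x := by linarith
  rcases le_or_gt x 0 with hx | hx
  · have h1 := Real.log_le_sub_one_of_pos (inv_pos.mpr hpos)
    rw [Real.log_inv] at h1
    have h2 : (1 - x)⁻¹ ≤ 1 + x + x^2 := by
      rw [inv_le_iff_one_le_mul₀ hpos]
      nlinarith
    nlinarith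
  · have ht : (0:ℝ) ≤ x + x^2 := by nlinarith
    have hq := Real.quadratic_le_exp_of_nonneg ht
    have hmul : Real.exp (-(x + x^2)) * Real.exp (x + x^2) = 1 := by
      rw [← Real.exp_add]; ring_nf; exact Real.exp_zero
    have hexp : Real.exp (-(x + x^2)) ≤ 1 - x := by
      nlinarith [Real.exp_pos (-(x + x^2)), Real.exp_pos (x + x^2)]
    have := (Real.le_log_iff_exp_le hpos).mpr hexp
    linarith [this]

theorem stmt6 {P : Type*} [Fintype P] [Nonempty P]
    (γ : ℕ → ℝ) (hγ : ∀ τ, γ τ ∈ Set.Icc (0 : ℝ) (1 / 2))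
    (m : ℕ → P → ℝ) (hm : ∀ τ p, m τ p ∈ Set.Icc (-1 : ℝ) 1)
    (π : ℕ → P → ℝ)
    (hinit_pos : ∀ p, 0 < π 0 p) (hinit_sum : ∑ p, π 0 p = 1)
    (hupd : ∀ τ p, π (τ + 1) p =
      π τ p * (1 - γ τ * m τ p) / ∑ q, π τ q * (1 - γ τ * m τ q))
    (T : ℕ) (p : P) :
    ∑ τ ∈ Finset.range (T + 1), γ τ * ∑ q, m τ q * π τ q ≤
      -Real.log (Finset.univ.inf' Finset.univ_nonempty (π 0)) +
      ∑ τ ∈ Finset.range (T + 1), γ τ * m τ p +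
      ∑ τ ∈ Finset.range (T + 1), (γ τ) ^ 2 * |m τ p| := by
  have habs : ∀ τ q, |γ τ * m τ q| ≤ 1/2 := by
    intro τ q
    rw [abs_mul]
    have h1 := hγ τ; have h2 := hm τ q
    simp only [Set.mem_Icc] at h1 h2
    have : |γ τ| = γ τ := abs_of_nonneg h1.1
    have hma : |m τ q| ≤ 1 := abs_le.mpr ⟨h2.1, h2.2⟩
    nlinarith [abs_nonneg (m τ q)]
  have hfac : ∀ τ q, (1:ℝ)/2 ≤ 1 - γ τ * m τ q := by
    intro τ q
    have := habs τ q
    have := abs_le.mp this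
    linarith [this.2]
  have hfacpos : ∀ τ q, (0:ℝ) < 1 - γ τ * m τ q := fun τ q => lt_of_lt_of_le (by norm_num) (hfac τ q)
  -- positivity of iterates
  have hpos : ∀ τ q, 0 < π τ q := by
    intro τ
    induction τ with
    | zero => exact hinit_pos
    | succ n ih =>
      intro q
      rw [hupd n q]
      have hZ : 0 < ∑ r, π n r * (1 - γ n * m n r) :=
        Finset.sum_pos (fun r _ => mul_pos (ih r) (hfacpos n r)) Finset.univ_nonempty
      exact div_pos (mul_pos (ih q) (hfacpos n q)) hZ
  have hZpos : ∀ τ, 0 < ∑ r, π τ r * (1 - γ τ * m τ r) :=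
    fun τ => Finset.sum_pos (fun r _ => mul_pos (hpos τ r) (hfacpos τ r)) Finset.univ_nonempty
  -- sum = 1
  have hsum : ∀ τ, ∑ q, π τ q = 1 := by
    intro τ
    induction τ with
    | zero => exact hinit_sum
    | succ n ih =>
      have : ∑ q, π (n+1) q = (∑ q, π n q * (1 - γ n * m n q)) / (∑ r, π n r * (1 - γ n * m n r)) := by
        rw [Finset.sum_div]
        exact Finset.sum_congr rfl fun q _ => hupd n q
      rw [this, div_self (ne_of_gt (hZpos n))]
  -- Z = 1 - γ ⟨m, π⟩
  have hZeq : ∀ τ, ∑ r, π τ r * (1 - γ τ * m τ r) = 1 - γ τ * ∑ q, m τ q * π τ q := by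
    intro τ
    have : ∀ q, π τ q * (1 - γ τ * m τ q) = π τ q - γ τ * (m τ q * π τ q) := by
      intro q; ring
    rw [Finset.sum_congr rfl fun q _ => this q, Finset.sum_sub_distrib, ← Finset.mul_sum, hsum τ]
  -- product formula
  have hprod : ∀ n, π n p = π 0 p *
      ∏ τ ∈ Finset.range n, ((1 - γ τ * m τ p) / ∑ r, π τ r * (1 - γ τ * m τ r)) := by
    intro n
    induction n with
    | zero => simp
    | succ k ih =>
      rw [Finset.prod_range_succ, ← mul_assoc, ← ih, hupd k p]
      ring
  -- log of terminal weight ≤ 0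
  have hterm : Real.log (π 0 p) + ∑ τ ∈ Finset.range (T+1),
      (Real.log (1 - γ τ * m τ p) - Real.log (∑ r, π τ r * (1 - γ τ * m τ r))) ≤ 0 := by
    have hle1 : π (T+1) p ≤ 1 := by
      rw [← hsum (T+1)]
      exact Finset.single_le_sum (fun q _ => (hpos (T+1) q).le) (Finset.mem_univ p)
    have hlog : Real.log (π (T+1) p) ≤ 0 := Real.log_nonpos (hpos (T+1) p).le hle1
    have heq : Real.log (π (T+1) p) = Real.log (π 0 p) + ∑ τ ∈ Finset.range (T+1),
        (Real.log (1 - γ τ * m τ p) - Real.log (∑ r, π τ r * (1 - γ τ * m τ r))) := by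
      rw [hprod (T+1), Real.log_mul (ne_of_gt (hpos 0 p)), Real.log_prod]
      · congr 1
        exact Finset.sum_congr rfl fun τ _ =>
          Real.log_div (ne_of_gt (hfacpos τ p)) (ne_of_gt (hZpos τ))
      · intro τ _
        exact ne_of_gt (div_pos (hfacpos τ p) (hZpos τ))
      · exact ne_of_gt (Finset.prod_pos fun τ _ => div_pos (hfacpos τ p) (hZpos τ))
    rw [← heq]; exact hlog
  -- step 1: γ⟨m,π⟩ ≤ -log Z
  have hstep1 : ∀ τ, γ τ * ∑ q, m τ q * π τ q ≤
      -Real.log (∑ r, π τ r * (1 - γ τ * m τ r)) := by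
    intro τ
    have h := Real.log_le_sub_one_of_pos (hZpos τ)
    rw [hZeq τ] at h ⊢
    linarith
  -- step 2: -log(1 - γ m_p) ≤ γ m_p + γ² |m_p|
  have hstep2 : ∀ τ, -Real.log (1 - γ τ * m τ p) ≤ γ τ * m τ p + (γ τ)^2 * |m τ p| := by
    intro τ
    have h := log_one_sub_ge (habs τ p)
    have h1 := hγ τ; have h2 := hm τ p
    simp only [Set.mem_Icc] at h1 h2
    have hsq : (γ τ * m τ p)^2 ≤ (γ τ)^2 * |m τ p| := by
      have hma : |m τ p| ≤ 1 := abs_le.mpr ⟨h2.1, h2.2⟩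
      have key : 0 ≤ (γ τ)^2 * |m τ p| * (1 - |m τ p|) :=
        mul_nonneg (mul_nonneg (sq_nonneg _) (abs_nonneg _)) (by linarith)
      nlinarith [sq_abs (m τ p)]
    linarith
  -- min bound
  have hmin : -Real.log (π 0 p) ≤ -Real.log (Finset.univ.inf' Finset.univ_nonempty (π 0)) := by
    have h1 : Finset.univ.inf' Finset.univ_nonempty (π 0) ≤ π 0 p :=
      Finset.inf'_le _ (Finset.mem_univ p)
    obtain ⟨q, _, hq⟩ := Finset.exists_mem_eq_inf' (Finset.univ_nonempty (α := P)) (π 0)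
    have h2 : 0 < Finset.univ.inf' Finset.univ_nonempty (π 0) := by rw [hq]; exact hinit_pos q
    have := Real.log_le_log h2 h1
    linarith
  calc ∑ τ ∈ Finset.range (T + 1), γ τ * ∑ q, m τ q * π τ q
      ≤ ∑ τ ∈ Finset.range (T+1), -Real.log (∑ r, π τ r * (1 - γ τ * m τ r)) :=
        Finset.sum_le_sum fun τ _ => hstep1 τ
    _ ≤ -Real.log (π 0 p) + ∑ τ ∈ Finset.range (T+1), -Real.log (1 - γ τ * m τ p) := by
        have := hterm
        rw [Finset.sum_sub_distrib] at this
        have h2 : ∑ τ ∈ Finset.range (T+1), -Real.log (1 - γ τ * m τ p) =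
            -∑ τ ∈ Finset.range (T+1), Real.log (1 - γ τ * m τ p) := by
          rw [Finset.sum_neg_distrib]
        have h3 : ∑ τ ∈ Finset.range (T+1), -Real.log (∑ r, π τ r * (1 - γ τ * m τ r)) =
            -∑ τ ∈ Finset.range (T+1), Real.log (∑ r, π τ r * (1 - γ τ * m τ r)) := by
          rw [Finset.sum_neg_distrib]
        rw [h2, h3]
        linarith
    _ ≤ -Real.log (Finset.univ.inf' Finset.univ_nonempty (π 0)) +
        ∑ τ ∈ Finset.range (T+1), (γ τ * m τ p + (γ τ)^2 * |m τ p|) := by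
        have := Finset.sum_le_sum (fun τ (_ : τ ∈ Finset.range (T+1)) => hstep2 τ)
        linarith [hmin]
    _ = -Real.log (Finset.univ.inf' Finset.univ_nonempty (π 0)) +
        ∑ τ ∈ Finset.range (T + 1), γ τ * m τ p +
        ∑ τ ∈ Finset.range (T + 1), (γ τ) ^ 2 * |m τ p| := by
        rw [Finset.sum_add_distrib]; ring
end

section
/- The replicator (REP) update is the unique minimizer of a χ²-type regularized linearized loss: for a finite set P, ρ > 0, loss vector ℓ ∈ ℝ^P with 0 ≤ ℓ_p ≤ ρ, learning rate 0 < η ≤ 1, and strictly positive probability vector ν on P, the vector π* defined by π*_p = ν_p (1 + η(⟨ν, ℓ⟩ − ℓ_p)/ρ) is the unique minimizer over the simplex Δ^P of π ↦ ⟨π, ℓ/ρ⟩ + (1/η) R(π ‖ ν), where R(π‖ν) = (1/2)∑_p ν_p(π_p/ν_p − 1)². -/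
open Finset

theorem stmt10 {P : Type*} [Fintype P] [Nonempty P]
    (ρ : ℝ) (hρ : 0 < ρ) (ℓ : P → ℝ) (hℓ : ∀ p, ℓ p ∈ Set.Icc (0 : ℝ) ρ)
    (η : ℝ) (hη : 0 < η) (hη1 : η ≤ 1)
    (ν : P → ℝ) (hν_pos : ∀ p, 0 < ν p) (hν_sum : ∑ p, ν p = 1)
    (πs : P → ℝ)
    (hπs : ∀ p, πs p = ν p * (1 + η * ((∑ q, ν q * ℓ q) - ℓ p) / ρ)) :
    ((∀ p, 0 ≤ πs p) ∧ ∑ p, πs p = 1) ∧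
    ∀ π : P → ℝ, (∀ p, 0 ≤ π p) → ∑ p, π p = 1 → π ≠ πs →
      (∑ p, πs p * (ℓ p / ρ)) + (1 / η) * ((1 / 2) * ∑ p, ν p * (πs p / ν p - 1) ^ 2) <
      (∑ p, π p * (ℓ p / ρ)) + (1 / η) * ((1 / 2) * ∑ p, ν p * (π p / ν p - 1) ^ 2) := by
  set L := ∑ q, ν q * ℓ q with hLdef
  have hρ' : ρ ≠ 0 := hρ.ne'
  have hη' : η ≠ 0 := hη.ne'
  have hL_nonneg : 0 ≤ L := Finset.sum_nonneg fun q _ => mul_nonneg (hν_pos q).le (hℓ q).1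
  have hnonneg : ∀ p, 0 ≤ πs p := by
    intro p
    rw [hπs p]
    apply mul_nonneg (hν_pos p).le
    have h1 : 0 ≤ ρ + η * (L - ℓ p) := by nlinarith [(hℓ p).1, (hℓ p).2]
    have : 1 + η * (L - ℓ p) / ρ = (ρ + η * (L - ℓ p)) / ρ := by field_simp
    rw [this]
    exact div_nonneg h1 hρ.le
  have hsum : ∑ p, πs p = 1 := by
    have h1 : ∀ p ∈ Finset.univ, πs p
        = ν p + (η / ρ) * (ν p * L) - (η / ρ) * (ν p * ℓ p) := by
      intro p _
      rw [hπs p]; field_simp; ring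
    rw [Finset.sum_congr rfl h1]
    rw [Finset.sum_sub_distrib, Finset.sum_add_distrib, ← Finset.mul_sum, ← Finset.mul_sum,
      ← Finset.sum_mul, hν_sum, one_mul, ← hLdef]
    ring
  refine ⟨⟨hnonneg, hsum⟩, ?_⟩
  intro π hπ_nonneg hπ_sum hπ_ne
  -- pointwise identity
  have key : ∀ p ∈ Finset.univ,
      π p * (ℓ p / ρ) + (1 / η) * ((1 / 2) * (ν p * (π p / ν p - 1) ^ 2))
      = πs p * (ℓ p / ρ) + (1 / η) * ((1 / 2) * (ν p * (πs p / ν p - 1) ^ 2))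
        + (π p - πs p) * (L / ρ) + (1 / (2 * η)) * ((π p - πs p) ^ 2 / ν p) := by
    intro p _
    have hνp : ν p ≠ 0 := (hν_pos p).ne'
    rw [hπs p]
    field_simp
    ring
  have hsum_eq :
      (∑ p, π p * (ℓ p / ρ)) + (1 / η) * ((1 / 2) * ∑ p, ν p * (π p / ν p - 1) ^ 2)
      = (∑ p, πs p * (ℓ p / ρ)) + (1 / η) * ((1 / 2) * ∑ p, ν p * (πs p / ν p - 1) ^ 2)
        + (1 / (2 * η)) * ∑ p, (π p - πs p) ^ 2 / ν p := by
    have h2 : ∑ p, (π p * (ℓ p / ρ) + (1 / η) * ((1 / 2) * (ν p * (π p / ν p - 1) ^ 2)))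
        = ∑ p, (πs p * (ℓ p / ρ) + (1 / η) * ((1 / 2) * (ν p * (πs p / ν p - 1) ^ 2))
          + (π p - πs p) * (L / ρ) + (1 / (2 * η)) * ((π p - πs p) ^ 2 / ν p)) :=
      Finset.sum_congr rfl key
    have h3 : ∑ p, (π p - πs p) * (L / ρ) = 0 := by
      rw [← Finset.sum_mul, Finset.sum_sub_distrib, hπ_sum, hsum, sub_self, zero_mul]
    simp only [Finset.sum_add_distrib, ← Finset.mul_sum, h3] at h2
    linarith [h2]
  rw [hsum_eq]
  have hpos : 0 < ∑ p, (π p - πs p) ^ 2 / ν p := by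
    obtain ⟨p, hp⟩ := Function.ne_iff.mp hπ_ne
    apply Finset.sum_pos' (fun q _ => div_nonneg (sq_nonneg _) (hν_pos q).le)
    exact ⟨p, Finset.mem_univ p, div_pos (lt_of_le_of_ne (sq_nonneg _) (Ne.symm (pow_ne_zero 2 (sub_ne_zero.mpr hp)))) (hν_pos p)⟩
  have : 0 < (1 / (2 * η)) * ∑ p, (π p - πs p) ^ 2 / ν p := by positivity
  linarith
end

section
/- Discounted regret bound for the REP algorithm: let P be finite, ρ > 0, ℓ^{(τ)} ∈ [0,ρ]^P, and (γ_τ) a sequence in (0, 1/2]. Define π^{(τ+1)}_p = π^{(τ)}_p(1 + γ_τ(⟨π^{(τ)}, ℓ^{(τ)}⟩ − ℓ^{(τ)}_p)/ρ) starting from a strictly positive probability vector π^{(0)}. Then for all T: ∑_{τ=0}^T γ_τ ⟨π^{(τ)}, ℓ^{(τ)}⟩ − min_{p∈P} ∑_{τ=0}^T γ_τ ℓ^{(τ)}_p ≤ −ρ log(min_p π^{(0)}_p) + ρ ∑_{τ=0}^T γ_τ². -/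
open Finset

lemma log_lb {x : ℝ} (hx : -(1/2 : ℝ) ≤ x) : x - x ^ 2 ≤ Real.log (1 + x) := by
  have h1 : (0:ℝ) < 1 + x := by linarith
  rcases le_or_gt 0 x with h0 | h0
  · -- log(1+x) ≥ x/(1+x) ≥ x - x²
    have h2 : Real.log (1 + x)⁻¹ ≤ (1 + x)⁻¹ - 1 :=
      Real.log_le_sub_one_of_pos (by positivity)
    rw [Real.log_inv] at h2
    have h3 : x / (1 + x) ≤ Real.log (1 + x) := by
      have h2' : (1:ℝ) - (1+x)⁻¹ = x / (1+x) := by field_simp; ring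
      linarith
    have h4 : x - x ^ 2 ≤ x / (1 + x) := by
      rw [le_div_iff₀ h1]; nlinarith
    linarith
  · -- monotonicity argument on [-1/2, 0]
    set f : ℝ → ℝ := fun y => Real.log (1 + y) - (y - y ^ 2) with hf
    have hderiv : ∀ y ∈ Set.Ioo (-(1/2):ℝ) 0, HasDerivAt f ((1+y)⁻¹ - (1 - 2*y)) y := by
      intro y hy
      have hy1 : (0:ℝ) < 1 + y := by linarith [hy.1]
      have h₁ : HasDerivAt (fun y : ℝ => 1 + y) 1 y := by
        simpa using (hasDerivAt_id y).const_add 1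
      have h₂ : HasDerivAt (fun y : ℝ => Real.log (1 + y)) ((1+y)⁻¹ * 1) y :=
        (Real.hasDerivAt_log hy1.ne').comp y h₁
      have h₃ : HasDerivAt (fun y : ℝ => y - y ^ 2) (1 - 2*y) y := by
        have := ((hasDerivAt_id y).sub ((hasDerivAt_pow 2 y)))
        exact this.congr_deriv (by norm_num)
      exact (h₂.sub h₃).congr_deriv (by ring)
    have hanti : AntitoneOn f (Set.Icc (-(1/2):ℝ) 0) := by
      apply antitoneOn_of_deriv_nonpos (convex_Icc _ _)
      · apply ContinuousOn.sub
        · apply ContinuousOn.log (by fun_prop)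
          intro y hy; have := hy.1; simp at this ⊢; linarith
        · fun_prop
      · rw [interior_Icc]
        intro y hy
        exact (hderiv y hy).differentiableAt.differentiableWithinAt
      · rw [interior_Icc]
        intro y hy
        rw [(hderiv y hy).deriv]
        have hy1 : (0:ℝ) < 1 + y := by linarith [hy.1]
        rw [sub_nonpos, inv_le_iff_one_le_mul₀ hy1]
        nlinarith [hy.1, hy.2]
    have hx0 : x ∈ Set.Icc (-(1/2):ℝ) 0 := ⟨hx, h0.le⟩
    have h00 : (0:ℝ) ∈ Set.Icc (-(1/2):ℝ) 0 := ⟨by norm_num, le_refl 0⟩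
    have := hanti hx0 h00 h0.le
    simp [hf] at this
    linarith

theorem stmt12 {P : Type*} [Fintype P] [Nonempty P]
    (ρ : ℝ) (hρ : 0 < ρ)
    (ℓ : ℕ → P → ℝ) (hℓ : ∀ τ p, ℓ τ p ∈ Set.Icc (0 : ℝ) ρ)
    (γ : ℕ → ℝ) (hγ : ∀ τ, γ τ ∈ Set.Ioc (0 : ℝ) (1 / 2))
    (π : ℕ → P → ℝ)
    (hinit_pos : ∀ p, 0 < π 0 p) (hinit_sum : ∑ p, π 0 p = 1)
    (hupd : ∀ τ p, π (τ + 1) p =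
      π τ p * (1 + γ τ * ((∑ q, π τ q * ℓ τ q) - ℓ τ p) / ρ))
    (T : ℕ) :
    ∑ τ ∈ Finset.range (T + 1), γ τ * ∑ q, π τ q * ℓ τ q -
      Finset.univ.inf' Finset.univ_nonempty
        (fun p => ∑ τ ∈ Finset.range (T + 1), γ τ * ℓ τ p) ≤
      -ρ * Real.log (Finset.univ.inf' Finset.univ_nonempty (π 0)) +
      ρ * ∑ τ ∈ Finset.range (T + 1), (γ τ) ^ 2 := by
  set A : ℕ → ℝ := fun τ => ∑ q, π τ q * ℓ τ q with hA
  -- basic invariants: positivity and normalization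
  have hkey : ∀ τ, (∀ p, 0 < π τ p) ∧ (∑ p, π τ p = 1) := by
    intro τ
    induction τ with
    | zero => exact ⟨hinit_pos, hinit_sum⟩
    | succ n ih =>
      obtain ⟨hpos, hsum⟩ := ih
      have hA0 : 0 ≤ A n :=
        Finset.sum_nonneg fun q _ => mul_nonneg (hpos q).le (hℓ n q).1
      have hAρ : A n ≤ ρ := by
        calc A n ≤ ∑ q, π n q * ρ :=
              Finset.sum_le_sum fun q _ =>
                mul_le_mul_of_nonneg_left (hℓ n q).2 (hpos q).le
          _ = ρ := by rw [← Finset.sum_mul, hsum, one_mul]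
      have hfac : ∀ p, (1/2:ℝ) ≤ 1 + γ n * (A n - ℓ n p) / ρ := by
        intro p
        have h1 : -ρ ≤ A n - ℓ n p := by linarith [(hℓ n p).2]
        have h2 : -(1/2:ℝ) ≤ γ n * (A n - ℓ n p) / ρ := by
          rw [le_div_iff₀ hρ]
          nlinarith [(hγ n).1, (hγ n).2,
            mul_nonneg (hγ n).1.le (by linarith : (0:ℝ) ≤ A n - ℓ n p + ρ),
            mul_nonneg hρ.le (by linarith [(hγ n).2] : (0:ℝ) ≤ 1/2 - γ n)]
        linarith
      refine ⟨fun p => ?_, ?_⟩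
      · rw [hupd]
        exact mul_pos (hpos p) (by linarith [hfac p])
      · calc ∑ p, π (n+1) p
            = ∑ p, (π n p + γ n / ρ * (π n p * A n) - γ n / ρ * (π n p * ℓ n p)) := by
              refine Finset.sum_congr rfl fun p _ => ?_
              rw [hupd]; field_simp; ring
          _ = (∑ p, π n p) + γ n / ρ * ((∑ p, π n p) * A n)
                - γ n / ρ * (∑ p, π n p * ℓ n p) := by
              rw [Finset.sum_sub_distrib, Finset.sum_add_distrib, ← Finset.mul_sum,
                ← Finset.mul_sum, ← Finset.sum_mul]
          _ = 1 := by
              have hAn : ∑ q, π n q * ℓ n q = A n := rfl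
              rw [hsum, hAn]; ring
  -- per-expert regret bound
  have hmain : ∀ p, ∑ τ ∈ Finset.range (T+1), γ τ * A τ
      - ∑ τ ∈ Finset.range (T+1), γ τ * ℓ τ p
      ≤ -ρ * Real.log (π 0 p) + ρ * ∑ τ ∈ Finset.range (T+1), (γ τ)^2 := by
    intro p
    -- bounds on the multiplicative factor per step
    have hx : ∀ τ, -(1/2:ℝ) ≤ γ τ * (A τ - ℓ τ p) / ρ ∧
        (γ τ * (A τ - ℓ τ p) / ρ)^2 ≤ (γ τ)^2 := by
      intro τ
      obtain ⟨hpos, hsum⟩ := hkey τ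
      have hA0 : 0 ≤ A τ :=
        Finset.sum_nonneg fun q _ => mul_nonneg (hpos q).le (hℓ τ q).1
      have hAρ : A τ ≤ ρ := by
        calc A τ ≤ ∑ q, π τ q * ρ :=
              Finset.sum_le_sum fun q _ =>
                mul_le_mul_of_nonneg_left (hℓ τ q).2 (hpos q).le
          _ = ρ := by rw [← Finset.sum_mul, hsum, one_mul]
      have h1 : -ρ ≤ A τ - ℓ τ p := by linarith [(hℓ τ p).2]
      have h1' : A τ - ℓ τ p ≤ ρ := by linarith [(hℓ τ p).1]
      constructor
      · rw [le_div_iff₀ hρ]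
        nlinarith [mul_nonneg (hγ τ).1.le (by linarith : (0:ℝ) ≤ A τ - ℓ τ p + ρ),
          mul_nonneg hρ.le (by linarith [(hγ τ).2] : (0:ℝ) ≤ 1/2 - γ τ)]
      · rw [div_pow, div_le_iff₀ (by positivity)]
        have hsq : (A τ - ℓ τ p)^2 ≤ ρ^2 := by nlinarith
        calc (γ τ * (A τ - ℓ τ p))^2 = (γ τ)^2 * (A τ - ℓ τ p)^2 := by ring
          _ ≤ (γ τ)^2 * ρ^2 := by
              exact mul_le_mul_of_nonneg_left hsq (sq_nonneg _)
    have hFpos : ∀ τ, (0:ℝ) < 1 + γ τ * (A τ - ℓ τ p) / ρ := fun τ => by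
      linarith [(hx τ).1]
    -- product formula
    have hprod : ∀ N, π N p = π 0 p * ∏ τ ∈ Finset.range N, (1 + γ τ * (A τ - ℓ τ p) / ρ) := by
      intro N
      induction N with
      | zero => simp
      | succ n ih =>
        have hAn : ∑ q, π n q * ℓ n q = A n := rfl
        rw [Finset.prod_range_succ, hupd, ih, hAn]; ring
    -- take logs
    have hlog : Real.log (π (T+1) p) = Real.log (π 0 p) +
        ∑ τ ∈ Finset.range (T+1), Real.log (1 + γ τ * (A τ - ℓ τ p) / ρ) := by
      rw [hprod (T+1), Real.log_mul (hinit_pos p).ne'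
        (Finset.prod_pos (fun τ _ => hFpos τ)).ne',
        Real.log_prod (fun τ _ => (hFpos τ).ne')]
    have hπle1 : π (T+1) p ≤ 1 := by
      obtain ⟨hpos, hsum⟩ := hkey (T+1)
      calc π (T+1) p ≤ ∑ q, π (T+1) q :=
            Finset.single_le_sum (fun q _ => (hpos q).le) (Finset.mem_univ p)
        _ = 1 := hsum
    have hlog0 : Real.log (π (T+1) p) ≤ 0 :=
      Real.log_nonpos ((hkey (T+1)).1 p).le hπle1
    have hsumle : ∑ τ ∈ Finset.range (T+1), (γ τ * (A τ - ℓ τ p) / ρ - (γ τ)^2)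
        ≤ ∑ τ ∈ Finset.range (T+1), Real.log (1 + γ τ * (A τ - ℓ τ p) / ρ) := by
      refine Finset.sum_le_sum fun τ _ => ?_
      have := log_lb (hx τ).1
      linarith [(hx τ).2]
    rw [Finset.sum_sub_distrib] at hsumle
    have hS : ∑ τ ∈ Finset.range (T+1), γ τ * (A τ - ℓ τ p) / ρ
        ≤ -Real.log (π 0 p) + ∑ τ ∈ Finset.range (T+1), (γ τ)^2 := by
      linarith
    have hmul := mul_le_mul_of_nonneg_left hS hρ.le
    have hexp : ρ * ∑ τ ∈ Finset.range (T+1), γ τ * (A τ - ℓ τ p) / ρ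
        = ∑ τ ∈ Finset.range (T+1), γ τ * A τ
          - ∑ τ ∈ Finset.range (T+1), γ τ * ℓ τ p := by
      rw [Finset.mul_sum, ← Finset.sum_sub_distrib]
      refine Finset.sum_congr rfl fun τ _ => ?_
      field_simp
    rw [hexp] at hmul
    linarith [hmul]
  -- conclude
  obtain ⟨p₀, _, hp₀⟩ := Finset.exists_mem_eq_inf' univ_nonempty
    (fun p => ∑ τ ∈ Finset.range (T+1), γ τ * ℓ τ p)
  obtain ⟨q₀, _, hq₀⟩ := Finset.exists_mem_eq_inf' univ_nonempty (π 0)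
  have hinf_pos : 0 < Finset.univ.inf' univ_nonempty (π 0) := by
    rw [hq₀]; exact hinit_pos q₀
  have hle : Finset.univ.inf' univ_nonempty (π 0) ≤ π 0 p₀ :=
    Finset.inf'_le _ (Finset.mem_univ p₀)
  have hlogle : Real.log (Finset.univ.inf' univ_nonempty (π 0)) ≤ Real.log (π 0 p₀) :=
    Real.log_le_log hinf_pos hle
  rw [hp₀]
  have := hmain p₀
  nlinarith [mul_le_mul_of_nonneg_left hlogle hρ.le]
end

section
/- In a nonatomic congestion game with nondecreasing continuous congestion functions, the set of Nash equilibria equals the set of minimizers over the product of simplexes Δ of the Rosenthal potential V(μ) = ∑_{r∈R} ∫_0^{(M̄μ)_r} c_r(u) du, and this set is nonempty, convex, and compact. -/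
open Finset

lemma int_tangent_lb (c : ℝ → ℝ) (hcont : Continuous c) (hmono : Monotone c) (a b : ℝ) :
    c a * (b - a) ≤ ∫ u in a..b, c u := by
  rcases le_total a b with h | h
  · have := intervalIntegral.integral_mono_on h
      (intervalIntegrable_const (c := c a))
      (hcont.intervalIntegrable (μ := MeasureTheory.volume) a b) (fun x hx => hmono hx.1)
    simpa [intervalIntegral.integral_const, smul_eq_mul, mul_comm] using this
  · rw [intervalIntegral.integral_symm]
    have := intervalIntegral.integral_mono_on h
      (hcont.intervalIntegrable (μ := MeasureTheory.volume) b a)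
      (intervalIntegrable_const (c := c a))
      (fun x hx => hmono hx.2)
    simp only [intervalIntegral.integral_const, smul_eq_mul] at this
    nlinarith [this]

lemma int_tangent_ub (c : ℝ → ℝ) (hcont : Continuous c) (hmono : Monotone c) (a b : ℝ) :
    (∫ u in a..b, c u) ≤ c b * (b - a) := by
  rcases le_total a b with h | h
  · have := intervalIntegral.integral_mono_on h
      (hcont.intervalIntegrable (μ := MeasureTheory.volume) a b)
      (intervalIntegrable_const (c := c b))
      (fun x hx => hmono hx.2)
    simpa [intervalIntegral.integral_const, smul_eq_mul, mul_comm] using this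
  · rw [intervalIntegral.integral_symm]
    have := intervalIntegral.integral_mono_on h
      (intervalIntegrable_const (c := c b))
      (hcont.intervalIntegrable (μ := MeasureTheory.volume) b a)
      (fun x hx => hmono hx.1)
    simp only [intervalIntegral.integral_const, smul_eq_mul] at this
    nlinarith [this]

lemma primitive_diff (c : ℝ → ℝ) (hcont : Continuous c) (a b : ℝ) :
    (∫ u in (0:ℝ)..b, c u) - ∫ u in (0:ℝ)..a, c u = ∫ u in a..b, c u := by
  rw [← intervalIntegral.integral_add_adjacent_intervals
    (hcont.intervalIntegrable (μ := MeasureTheory.volume) 0 a)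
    (hcont.intervalIntegrable (μ := MeasureTheory.volume) a b)]
  ring

lemma swap_sum {R ι : Type*} [Fintype R] [DecidableEq R] [Fintype ι]
    (Pb : ι → Finset (Finset R)) (m : ι → ℝ) (g : R → ℝ) (ν : ι → Finset R → ℝ) :
    ∑ r, g r * (∑ k, m k * ∑ p ∈ (Pb k).filter (fun p => r ∈ p), ν k p)
      = ∑ k, m k * ∑ p ∈ Pb k, ν k p * ∑ r ∈ p, g r := by
  simp only [Finset.mul_sum, Finset.sum_filter, mul_ite, mul_zero, ite_mul, zero_mul]
  rw [Finset.sum_comm]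
  refine Finset.sum_congr rfl fun k _ => ?_
  rw [Finset.sum_comm]
  refine Finset.sum_congr rfl fun p _ => ?_
  rw [← Finset.sum_filter, Finset.filter_univ_mem]
  exact Finset.sum_congr rfl fun r _ => by ring

theorem stmt14 {R ι : Type*} [Fintype R] [DecidableEq R] [Fintype ι]
    (Pb : ι → Finset (Finset R)) (hPb : ∀ k, (Pb k).Nonempty)
    (m : ι → ℝ) (hm : ∀ k, 0 < m k)
    (c : R → ℝ → ℝ) (hc_cont : ∀ r, Continuous (c r)) (hc_mono : ∀ r, Monotone (c r))
    (hc_nonneg : ∀ r u, 0 ≤ c r u)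
    (Δ : Set (ι → Finset R → ℝ))
    (hΔ : Δ = {μ | ∀ k, (∀ p, 0 ≤ μ k p) ∧ (∀ p ∉ Pb k, μ k p = 0) ∧
      ∑ p ∈ Pb k, μ k p = 1})
    (φ : (ι → Finset R → ℝ) → R → ℝ)
    (hφ : ∀ μ r, φ μ r = ∑ k, m k * ∑ p ∈ (Pb k).filter (fun p => r ∈ p), μ k p)
    (ℓ : (ι → Finset R → ℝ) → ι → Finset R → ℝ)
    (hℓ : ∀ μ k p, ℓ μ k p = ∑ r ∈ p, c r (φ μ r))
    (V : (ι → Finset R → ℝ) → ℝ)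
    (hV : ∀ μ, V μ = ∑ r, ∫ u in (0:ℝ)..(φ μ r), c r u) :
    {μ ∈ Δ | ∀ k, ∀ p ∈ Pb k, 0 < μ k p → ∀ p' ∈ Pb k, ℓ μ k p ≤ ℓ μ k p'} =
      {μ ∈ Δ | ∀ ν ∈ Δ, V μ ≤ V ν} ∧
    {μ ∈ Δ | ∀ ν ∈ Δ, V μ ≤ V ν}.Nonempty ∧
    Convex ℝ {μ ∈ Δ | ∀ ν ∈ Δ, V μ ≤ V ν} ∧
    IsCompact {μ ∈ Δ | ∀ ν ∈ Δ, V μ ≤ V ν} := by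
  classical
  have hΔmem : ∀ μ, μ ∈ Δ ↔ ∀ k, (∀ p, 0 ≤ μ k p) ∧ (∀ p ∉ Pb k, μ k p = 0) ∧
      ∑ p ∈ Pb k, μ k p = 1 := fun μ => by rw [hΔ]; exact Iff.rfl
  -- continuity of V and φ
  have hφcont : ∀ r, Continuous fun μ => φ μ r := by
    intro r
    have : (fun μ => φ μ r) = fun μ : ι → Finset R → ℝ =>
        ∑ k, m k * ∑ p ∈ (Pb k).filter (fun p => r ∈ p), μ k p := funext fun μ => hφ μ r
    rw [this]
    exact continuous_finset_sum _ fun k _ => continuous_const.mul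
      (continuous_finset_sum _ fun p _ => (continuous_apply p).comp (continuous_apply k))
  have hVcont : Continuous V := by
    have : V = fun μ => ∑ r, ∫ u in (0:ℝ)..(φ μ r), c r u := funext hV
    rw [this]
    exact continuous_finset_sum _ fun r _ =>
      (intervalIntegral.continuous_primitive
        (fun a b => (hc_cont r).intervalIntegrable a b) 0).comp (hφcont r)
  -- Δ is closed
  have hΔclosed : IsClosed Δ := by
    rw [hΔ]
    have heq : {μ : ι → Finset R → ℝ | ∀ k, (∀ p, 0 ≤ μ k p) ∧ (∀ p ∉ Pb k, μ k p = 0) ∧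
        ∑ p ∈ Pb k, μ k p = 1}
        = ⋂ k, ((⋂ p, {μ : ι → Finset R → ℝ | 0 ≤ μ k p}) ∩
            (⋂ p, {μ : ι → Finset R → ℝ | p ∉ Pb k → μ k p = 0}) ∩
            {μ : ι → Finset R → ℝ | ∑ p ∈ Pb k, μ k p = 1}) := by
      ext μ
      simp only [Set.mem_setOf_eq, Set.mem_iInter, Set.mem_inter_iff]
      exact ⟨fun h k => ⟨⟨(h k).1, (h k).2.1⟩, (h k).2.2⟩,
        fun h k => ⟨(h k).1.1, (h k).1.2, (h k).2⟩⟩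
    rw [heq]
    refine isClosed_iInter fun k => (IsClosed.inter (IsClosed.inter ?_ ?_) ?_)
    · exact isClosed_iInter fun p =>
        isClosed_le continuous_const ((continuous_apply p).comp (continuous_apply k))
    · refine isClosed_iInter fun p => ?_
      by_cases hp : p ∈ Pb k
      · convert isClosed_univ using 1
        ext μ; simp [hp]
      · have : {μ : ι → Finset R → ℝ | p ∉ Pb k → μ k p = 0}
            = {μ : ι → Finset R → ℝ | μ k p = 0} := by
          ext μ; simp [hp]
        rw [this]
        exact isClosed_eq ((continuous_apply p).comp (continuous_apply k)) continuous_const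
    · exact isClosed_eq (continuous_finset_sum _ fun p _ =>
        (continuous_apply p).comp (continuous_apply k)) continuous_const
  -- Δ is bounded
  have hΔbdd : Bornology.IsBounded Δ := by
    apply (Metric.isBounded_closedBall (x := (0 : ι → Finset R → ℝ)) (r := 1)).subset
    intro μ hμ
    have hμ' := (hΔmem μ).mp hμ
    rw [Metric.mem_closedBall, dist_zero_right]
    rw [pi_norm_le_iff_of_nonneg zero_le_one]
    intro k
    rw [pi_norm_le_iff_of_nonneg zero_le_one]
    intro p
    obtain ⟨h1, h2, h3⟩ := hμ' k
    rw [Real.norm_eq_abs, abs_le]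
    refine ⟨by linarith [h1 p], ?_⟩
    by_cases hp : p ∈ Pb k
    · calc μ k p ≤ ∑ q ∈ Pb k, μ k q := Finset.single_le_sum (fun q _ => h1 q) hp
        _ = 1 := h3
    · rw [h2 p hp]; exact zero_le_one
  have hΔcpt : IsCompact Δ := Metric.isCompact_iff_isClosed_bounded.mpr ⟨hΔclosed, hΔbdd⟩
  -- Δ is nonempty
  have hΔne : Δ.Nonempty := by
    refine ⟨fun k p => if p = (hPb k).choose then 1 else 0, (hΔmem _).mpr fun k => ?_⟩
    refine ⟨fun p => by split <;> norm_num, fun p hp => ?_, ?_⟩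
    · rw [if_neg]
      intro h
      exact hp (h ▸ (hPb k).choose_spec)
    · rw [Finset.sum_ite_eq' (Pb k) (hPb k).choose (fun _ => (1:ℝ)), if_pos (hPb k).choose_spec]
  -- the basic lower bound (gradient inequality)
  have lower0 : ∀ μ ν, V μ + ∑ r, c r (φ μ r) * (φ ν r - φ μ r) ≤ V ν := by
    intro μ ν
    have h1 : ∑ r, c r (φ μ r) * (φ ν r - φ μ r) ≤ V ν - V μ := by
      rw [hV, hV, ← Finset.sum_sub_distrib]
      refine Finset.sum_le_sum fun r _ => ?_
      rw [primitive_diff (c r) (hc_cont r)]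
      exact int_tangent_lb (c r) (hc_cont r) (hc_mono r) (φ μ r) (φ ν r)
    linarith
  -- pairing identity
  have pairing : ∀ μ ν, ∑ r, c r (φ μ r) * φ ν r
      = ∑ k, m k * ∑ p ∈ Pb k, ν k p * ℓ μ k p := by
    intro μ ν
    simp only [hℓ]
    calc ∑ r, c r (φ μ r) * φ ν r
        = ∑ r, c r (φ μ r) * (∑ k, m k * ∑ p ∈ (Pb k).filter (fun p => r ∈ p), ν k p) := by
          exact Finset.sum_congr rfl fun r _ => by rw [hφ ν r]
      _ = ∑ k, m k * ∑ p ∈ Pb k, ν k p * ∑ r ∈ p, c r (φ μ r) :=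
          swap_sum Pb m (fun r => c r (φ μ r)) ν
  -- lower bound in loss form
  have lower : ∀ μ ν, V μ + ((∑ k, m k * ∑ p ∈ Pb k, ν k p * ℓ μ k p)
      - ∑ k, m k * ∑ p ∈ Pb k, μ k p * ℓ μ k p) ≤ V ν := by
    intro μ ν
    have h2 : ∑ r, c r (φ μ r) * (φ ν r - φ μ r)
        = (∑ k, m k * ∑ p ∈ Pb k, ν k p * ℓ μ k p)
          - ∑ k, m k * ∑ p ∈ Pb k, μ k p * ℓ μ k p := by
      rw [← pairing μ ν, ← pairing μ μ, ← Finset.sum_sub_distrib]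
      exact Finset.sum_congr rfl fun r _ => by ring
    have := lower0 μ ν
    linarith
  -- Direction: Nash ⇒ minimizer
  have nash_min : ∀ μ ∈ Δ,
      (∀ k, ∀ p ∈ Pb k, 0 < μ k p → ∀ p' ∈ Pb k, ℓ μ k p ≤ ℓ μ k p') →
      ∀ ν ∈ Δ, V μ ≤ V ν := by
    intro μ hμΔ hNash ν hνΔ
    have per_k : ∀ k, ∑ p ∈ Pb k, μ k p * ℓ μ k p ≤ ∑ p ∈ Pb k, ν k p * ℓ μ k p := by
      intro k
      obtain ⟨hμ1, hμ2, hμ3⟩ := (hΔmem μ).mp hμΔ k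
      obtain ⟨hν1, hν2, hν3⟩ := (hΔmem ν).mp hνΔ k
      have hex : ∃ p₀ ∈ Pb k, 0 < μ k p₀ := by
        by_contra h
        push_neg at h
        have : ∑ p ∈ Pb k, μ k p ≤ 0 := Finset.sum_nonpos fun p hp => h p hp
        linarith
      obtain ⟨p₀, hp₀, hp₀pos⟩ := hex
      have hL_le : ∀ p ∈ Pb k, ℓ μ k p₀ ≤ ℓ μ k p := fun p hp => hNash k p₀ hp₀ hp₀pos p hp
      calc ∑ p ∈ Pb k, μ k p * ℓ μ k p ≤ ∑ p ∈ Pb k, μ k p * ℓ μ k p₀ := by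
            refine Finset.sum_le_sum fun p hp => ?_
            rcases eq_or_lt_of_le (hμ1 p) with h0 | hpos
            · rw [← h0]; simp
            · exact mul_le_mul_of_nonneg_left (hNash k p hp hpos p₀ hp₀) hpos.le
        _ = ℓ μ k p₀ := by rw [← Finset.sum_mul, hμ3, one_mul]
        _ = ∑ p ∈ Pb k, ν k p * ℓ μ k p₀ := by rw [← Finset.sum_mul, hν3, one_mul]
        _ ≤ ∑ p ∈ Pb k, ν k p * ℓ μ k p :=
            Finset.sum_le_sum fun p hp => mul_le_mul_of_nonneg_left (hL_le p hp) (hν1 p)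
    have hsum : ∑ k, m k * ∑ p ∈ Pb k, μ k p * ℓ μ k p
        ≤ ∑ k, m k * ∑ p ∈ Pb k, ν k p * ℓ μ k p :=
      Finset.sum_le_sum fun k _ => mul_le_mul_of_nonneg_left (per_k k) (hm k).le
    have := lower μ ν
    linarith
  -- Direction: minimizer ⇒ Nash
  have min_nash : ∀ μ ∈ Δ, (∀ ν ∈ Δ, V μ ≤ V ν) →
      ∀ k, ∀ p ∈ Pb k, 0 < μ k p → ∀ p' ∈ Pb k, ℓ μ k p ≤ ℓ μ k p' := by
    intro μ hμΔ hmin k p hp hpos p' hp'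
    by_contra hlt
    push_neg at hlt
    set D : ℝ := ℓ μ k p - ℓ μ k p' with hD_def
    have hD : 0 < D := by simp only [hD_def]; linarith
    have hpp' : p ≠ p' := fun h => by rw [h] at hlt; exact lt_irrefl _ hlt
    obtain ⟨hμ1, hμ2, hμ3⟩ := (hΔmem μ).mp hμΔ k
    -- modulus of continuity choice
    set G : ℝ → ℝ := fun t => ∑ r, (c r (φ μ r + m k * t) - c r (φ μ r - m k * t)) with hG_def
    have hGcont : Continuous G := by
      refine continuous_finset_sum _ fun r _ => Continuous.sub ?_ ?_
      · exact (hc_cont r).comp (continuous_const.add (continuous_const.mul continuous_id))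
      · exact (hc_cont r).comp (continuous_const.sub (continuous_const.mul continuous_id))
    have hG0 : G 0 = 0 := by simp [hG_def]
    obtain ⟨δ, hδpos, hδ⟩ := Metric.continuousAt_iff.mp hGcont.continuousAt D hD
    set ε : ℝ := min (μ k p) (δ / 2) with hε_def
    have hεpos : 0 < ε := lt_min hpos (half_pos hδpos)
    have hεμ : ε ≤ μ k p := min_le_left _ _
    have hεδ : ε < δ := lt_of_le_of_lt (min_le_right _ _) (half_lt_self hδpos)
    have hGε : G ε < D := by
      have hd : dist ε 0 < δ := by
        rw [Real.dist_eq, sub_zero, abs_of_pos hεpos]; exact hεδ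
      have := hδ hd
      rw [Real.dist_eq, hG0, sub_zero] at this
      exact lt_of_le_of_lt (le_abs_self _) this
    -- perturbed strategy
    set ν : ι → Finset R → ℝ := Function.update μ k
      (fun q => μ k q + (if q = p' then ε else 0) - (if q = p then ε else 0)) with hν_def
    have hνk : ∀ q, ν k q = μ k q + (if q = p' then ε else 0) - (if q = p then ε else 0) := by
      intro q; rw [hν_def, Function.update_self]
    have hνk' : ∀ k', k' ≠ k → ν k' = μ k' := by
      intro k' hk'; rw [hν_def, Function.update_of_ne hk']
    have hνΔ : ν ∈ Δ := by
      rw [hΔmem]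
      intro k'
      by_cases hk : k' = k
      · subst hk
        refine ⟨fun q => ?_, fun q hq => ?_, ?_⟩
        · rw [hνk]
          split_ifs with h1 h2 h2
          · exact absurd (h2.symm.trans h1) hpp'
          · linarith [hμ1 q]
          · subst h2; linarith
          · linarith [hμ1 q]
        · rw [hνk, if_neg (fun h : q = p' => hq (by rw [h]; exact hp')),
            if_neg (fun h : q = p => hq (by rw [h]; exact hp)), hμ2 q hq]; ring
        · have : ∀ q ∈ Pb k', ν k' q
              = μ k' q + (if q = p' then ε else 0) - (if q = p then ε else 0) :=
            fun q _ => hνk q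
          rw [Finset.sum_congr rfl this]
          simp only [Finset.sum_sub_distrib, Finset.sum_add_distrib,
            Finset.sum_ite_eq' (Pb k') p' (fun _ => ε), Finset.sum_ite_eq' (Pb k') p (fun _ => ε),
            if_pos hp', if_pos hp, hμ3]
          ring
      · rw [hνk' k' hk]
        exact (hΔmem μ).mp hμΔ k'
    -- change in flows
    have hφν : ∀ r, φ ν r = φ μ r
        + m k * ε * ((if r ∈ p' then 1 else 0) - (if r ∈ p then 1 else 0)) := by
      intro r
      rw [hφ, hφ]
      have hterm : ∀ k' : ι, m k' * ∑ q ∈ (Pb k').filter (fun q => r ∈ q), ν k' q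
          = m k' * ∑ q ∈ (Pb k').filter (fun q => r ∈ q), μ k' q
            + (if k' = k then m k * ε * ((if r ∈ p' then 1 else 0) - (if r ∈ p then 1 else 0))
              else 0) := by
        intro k'
        by_cases hk : k' = k
        · subst hk
          rw [if_pos rfl]
          have : ∀ q ∈ (Pb k').filter (fun q => r ∈ q), ν k' q
              = μ k' q + (if q = p' then ε else 0) - (if q = p then ε else 0) :=
            fun q _ => hνk q
          rw [Finset.sum_congr rfl this]
          simp only [Finset.sum_sub_distrib, Finset.sum_add_distrib,
            Finset.sum_ite_eq' _ p' (fun _ => ε), Finset.sum_ite_eq' _ p (fun _ => ε),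
            Finset.mem_filter]
          by_cases h1 : r ∈ p' <;> by_cases h2 : r ∈ p <;>
            simp [h1, h2, hp, hp'] <;> ring
        · rw [if_neg hk, hνk' k' hk, add_zero]
      rw [Finset.sum_congr rfl (fun k' _ => hterm k'), Finset.sum_add_distrib,
        Finset.sum_ite_eq' Finset.univ k
          (fun _ => m k * ε * ((if r ∈ p' then 1 else 0) - (if r ∈ p then 1 else 0))),
        if_pos (Finset.mem_univ k)]
    -- first-order term
    have key1 : ∑ r, c r (φ μ r) * (φ ν r - φ μ r) = m k * ε * (ℓ μ k p' - ℓ μ k p) := by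
      have e1 : ∀ q : Finset R, ∑ r ∈ q, c r (φ μ r)
          = ∑ r, (if r ∈ q then (1:ℝ) else 0) * c r (φ μ r) := by
        intro q
        simp only [ite_mul, one_mul, zero_mul, ← Finset.sum_filter, Finset.filter_univ_mem]
      rw [hℓ, hℓ, e1 p, e1 p', ← Finset.sum_sub_distrib, Finset.mul_sum]
      refine Finset.sum_congr rfl fun r _ => ?_
      rw [hφν r]
      ring
    -- second-order term
    have key2 : V ν - V μ ≤ ∑ r, c r (φ μ r) * (φ ν r - φ μ r) + m k * ε * G ε := by
      have hub : V ν - V μ ≤ ∑ r, c r (φ ν r) * (φ ν r - φ μ r) := by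
        rw [hV, hV, ← Finset.sum_sub_distrib]
        refine Finset.sum_le_sum fun r _ => ?_
        rw [primitive_diff (c r) (hc_cont r)]
        exact int_tangent_ub (c r) (hc_cont r) (hc_mono r) (φ μ r) (φ ν r)
      have hterm : ∀ r, c r (φ ν r) * (φ ν r - φ μ r)
          ≤ c r (φ μ r) * (φ ν r - φ μ r)
            + m k * ε * (c r (φ μ r + m k * ε) - c r (φ μ r - m k * ε)) := by
        intro r
        have ht : 0 ≤ m k * ε := (mul_pos (hm k) hεpos).le
        have hmono1 := hc_mono r (show φ μ r - m k * ε ≤ φ μ r by linarith)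
        have hmono2 := hc_mono r (show φ μ r ≤ φ μ r + m k * ε by linarith)
        have hd := hφν r
        by_cases h1 : r ∈ p' <;> by_cases h2 : r ∈ p <;>
          simp only [h1, h2, if_true, if_false] at hd
        · rw [hd]; ring_nf; nlinarith
        · rw [hd]
          have : φ μ r + m k * ε * (1 - 0) = φ μ r + m k * ε := by ring
          rw [this]
          nlinarith
        · rw [hd]
          have : φ μ r + m k * ε * (0 - 1) = φ μ r - m k * ε := by ring
          rw [this]
          nlinarith
        · rw [hd]; ring_nf; nlinarith
      calc V ν - V μ ≤ ∑ r, c r (φ ν r) * (φ ν r - φ μ r) := hub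
        _ ≤ ∑ r, (c r (φ μ r) * (φ ν r - φ μ r)
            + m k * ε * (c r (φ μ r + m k * ε) - c r (φ μ r - m k * ε))) :=
            Finset.sum_le_sum fun r _ => hterm r
        _ = ∑ r, c r (φ μ r) * (φ ν r - φ μ r) + m k * ε * G ε := by
            rw [Finset.sum_add_distrib, hG_def, Finset.mul_sum]
      -- done
    have hmkε : 0 < m k * ε := mul_pos (hm k) hεpos
    have hfinal : V ν - V μ < 0 := by
      have := key2
      rw [key1] at this
      have hq : m k * ε * (ℓ μ k p' - ℓ μ k p) = -(m k * ε * D) := by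
        rw [hD_def]; ring
      nlinarith [hGε, hmkε]
    have := hmin ν hνΔ
    linarith
  -- convexity ingredients
  have hφlin : ∀ (a b : ℝ) (μ₁ μ₂ : ι → Finset R → ℝ) (r : R),
      φ (a • μ₁ + b • μ₂) r = a * φ μ₁ r + b * φ μ₂ r := by
    intro a b μ₁ μ₂ r
    rw [hφ, hφ, hφ, Finset.mul_sum, Finset.mul_sum, ← Finset.sum_add_distrib]
    refine Finset.sum_congr rfl fun k _ => ?_
    simp only [Pi.add_apply, Pi.smul_apply, smul_eq_mul]
    rw [Finset.sum_add_distrib, ← Finset.mul_sum, ← Finset.mul_sum]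
    ring
  have hcomboΔ : ∀ (a b : ℝ), 0 ≤ a → 0 ≤ b → a + b = 1 →
      ∀ μ₁ ∈ Δ, ∀ μ₂ ∈ Δ, a • μ₁ + b • μ₂ ∈ Δ := by
    intro a b ha hb hab μ₁ hμ₁ μ₂ hμ₂
    rw [hΔmem]
    intro k
    obtain ⟨h11, h12, h13⟩ := (hΔmem μ₁).mp hμ₁ k
    obtain ⟨h21, h22, h23⟩ := (hΔmem μ₂).mp hμ₂ k
    refine ⟨fun q => ?_, fun q hq => ?_, ?_⟩
    · simp only [Pi.add_apply, Pi.smul_apply, smul_eq_mul]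
      have := h11 q; have := h21 q
      positivity
    · simp only [Pi.add_apply, Pi.smul_apply, smul_eq_mul, h12 q hq, h22 q hq]
      ring
    · simp only [Pi.add_apply, Pi.smul_apply, smul_eq_mul]
      rw [Finset.sum_add_distrib, ← Finset.mul_sum, ← Finset.mul_sum, h13, h23]
      linarith
  -- assemble
  refine ⟨?_, ?_, ?_, ?_⟩
  · ext μ
    simp only [Set.mem_setOf_eq]
    constructor
    · rintro ⟨hμΔ, hNash⟩
      exact ⟨hμΔ, nash_min μ hμΔ hNash⟩
    · rintro ⟨hμΔ, hmin⟩
      exact ⟨hμΔ, min_nash μ hμΔ hmin⟩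
  · obtain ⟨μ, hμΔ, hμmin⟩ := hΔcpt.exists_isMinOn hΔne hVcont.continuousOn
    exact ⟨μ, hμΔ, fun ν hν => hμmin hν⟩
  · intro μ₁ hμ₁ μ₂ hμ₂ a b ha hb hab
    simp only [Set.mem_setOf_eq] at hμ₁ hμ₂ ⊢
    obtain ⟨hμ₁Δ, hμ₁min⟩ := hμ₁
    obtain ⟨hμ₂Δ, hμ₂min⟩ := hμ₂
    have hcΔ : a • μ₁ + b • μ₂ ∈ Δ := hcomboΔ a b ha hb hab μ₁ hμ₁Δ μ₂ hμ₂Δ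
    refine ⟨hcΔ, fun ν hν => ?_⟩
    have l1 := lower0 (a • μ₁ + b • μ₂) μ₁
    have l2 := lower0 (a • μ₁ + b • μ₂) μ₂
    have hzero : a * (∑ r, c r (φ (a • μ₁ + b • μ₂) r) * (φ μ₁ r - φ (a • μ₁ + b • μ₂) r))
        + b * (∑ r, c r (φ (a • μ₁ + b • μ₂) r) * (φ μ₂ r - φ (a • μ₁ + b • μ₂) r)) = 0 := by
      rw [Finset.mul_sum, Finset.mul_sum, ← Finset.sum_add_distrib]
      refine Finset.sum_eq_zero fun r _ => ?_
      have h := hφlin a b μ₁ μ₂ r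
      set C := c r (φ (a • μ₁ + b • μ₂) r)
      calc a * (C * (φ μ₁ r - φ (a • μ₁ + b • μ₂) r))
          + b * (C * (φ μ₂ r - φ (a • μ₁ + b • μ₂) r))
          = C * ((a * φ μ₁ r + b * φ μ₂ r) - (a + b) * φ (a • μ₁ + b • μ₂) r) := by ring
        _ = 0 := by rw [← h, hab]; ring
    have hVc : V (a • μ₁ + b • μ₂) ≤ a * V μ₁ + b * V μ₂ := by
      have e1 := mul_le_mul_of_nonneg_left l1 ha
      have e2 := mul_le_mul_of_nonneg_left l2 hb
      rw [mul_add] at e1 e2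
      have hVcc : a * V (a • μ₁ + b • μ₂) + b * V (a • μ₁ + b • μ₂)
          = V (a • μ₁ + b • μ₂) := by rw [← add_mul, hab, one_mul]
      linarith
    calc V (a • μ₁ + b • μ₂) ≤ a * V μ₁ + b * V μ₂ := hVc
      _ ≤ a * V ν + b * V ν := by
          have := hμ₁min ν hν; have := hμ₂min ν hν
          have e1 := mul_le_mul_of_nonneg_left (hμ₁min ν hν) ha
          have e2 := mul_le_mul_of_nonneg_left (hμ₂min ν hν) hb
          linarith
      _ = V ν := by rw [← add_mul, hab, one_mul]
  · have hMclosed : IsClosed {μ ∈ Δ | ∀ ν ∈ Δ, V μ ≤ V ν} := by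
      have heq : {μ ∈ Δ | ∀ ν ∈ Δ, V μ ≤ V ν} = Δ ∩ ⋂ ν ∈ Δ, {μ | V μ ≤ V ν} := by
        ext μ
        constructor
        · rintro ⟨h1, h2⟩
          exact ⟨h1, Set.mem_iInter₂.mpr fun ν hν => h2 ν hν⟩
        · rintro ⟨h1, h2⟩
          exact ⟨h1, fun ν hν => Set.mem_iInter₂.mp h2 ν hν⟩
      rw [heq]
      exact hΔclosed.inter (isClosed_biInter fun ν _ => isClosed_le hVcont continuous_const)
    exact hΔcpt.of_isClosed_subset hMclosed fun μ hμ => hμ.1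
end
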